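/- Let Y be a topological space such that X = ω ⊕ Y (the disjoint union of a countable discrete set and Y, with Y closed in X and ω a set of isolated points of X, and such that the subspace topology on Y from X coincides with the topology of Y). If Y is exponentially separable, then X is exponentially separable. -/

import Mathlib

/-- A space is exponentially separable. -/
def ExpSep (X : Type*) [TopologicalSpace X] : Prop :=
  ∀ F : Set (Set X), F.Countable → (∀ C ∈ F, IsClosed C) →
    ∃ A : Set X, A.Countable ∧ ∀ G ⊆ F, (⋂₀ G).Nonempty → (A ∩ ⋂₀ G).Nonempty

theorem stmt15 (Y : Type*) [TopologicalSpace Y] (h : ExpSep Y) : ExpSep (ℕ ⊕ Y) := by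
  intro F hFc hFcl
  obtain ⟨A', hA'c, hA'⟩ := h ((fun C => Sum.inr ⁻¹' C) '' F) (hFc.image _)
    (by rintro _ ⟨C, hC, rfl⟩; exact (hFcl C hC).preimage continuous_inr)
  refine ⟨Set.range Sum.inl ∪ Sum.inr '' A', (Set.countable_range _).union (hA'c.image _), ?_⟩
  intro G hG ⟨x, hx⟩
  cases x with
  | inl n => exact ⟨Sum.inl n, Or.inl ⟨n, rfl⟩, hx⟩
  | inr y =>
    obtain ⟨a, haA, haG⟩ := hA' ((fun C => Sum.inr ⁻¹' C) '' G)
      (Set.image_mono hG)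
      ⟨y, by rintro _ ⟨C, hC, rfl⟩; exact hx C hC⟩
    exact ⟨Sum.inr a, Or.inr ⟨a, haA, rfl⟩,
      fun C hC => haG (Sum.inr ⁻¹' C) ⟨C, hC, rfl⟩⟩
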